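/- arXiv:2403.05078 — 2 statements merged into one kernel-verified Lean document; each statement's English description precedes it below -/
import Mathlib

section
/- Let n ≥ 1. The volume of the Euclidean n-ball of radius R > 0 equals R^n π^{n/2} / Γ(n/2 + 1), and this coincides with the limit as v → 0 of R^{n/2} J_{n/2}(2πR‖v‖) / ‖v‖^{n/2}, where J_{n/2} is the Bessel function of the first kind. -/
open scoped Real Topology
open MeasureTheory

/-- The Bessel function of the first kind of order `ν`, defined by its power series. -/
noncomputable def besselJ (ν x : ℝ) : ℝ :=
  (x / 2) ^ ν * ∑' k : ℕ, ((-1 : ℝ) ^ k / (k.factorial * Real.Gamma (ν + k + 1))) * (x / 2) ^ (2 * k)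

lemma gamma_fact_le (ν : ℝ) (hν : 0 ≤ ν) (k : ℕ) :
    Real.Gamma (ν + 1) * k.factorial ≤ Real.Gamma (ν + k + 1) := by
  induction k with
  | zero => simp
  | succ k ih =>
      have h1 : (ν + k + 1 : ℝ) ≠ 0 := by positivity
      have hrec : Real.Gamma (ν + (k + 1 : ℕ) + 1) = (ν + k + 1) * Real.Gamma (ν + k + 1) := by
        rw [show (ν + (k + 1 : ℕ) + 1 : ℝ) = (ν + k + 1) + 1 by push_cast; ring,
          Real.Gamma_add_one h1]
      rw [hrec]
      have hΓpos : 0 < Real.Gamma (ν + 1) := Real.Gamma_pos_of_pos (by linarith)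
      have hk : ((k : ℝ) + 1) * (Real.Gamma (ν + 1) * k.factorial) ≤
          (ν + k + 1) * Real.Gamma (ν + k + 1) := by
        apply mul_le_mul (by linarith) ih (by positivity) (by positivity)
      calc Real.Gamma (ν + 1) * ((k + 1).factorial : ℝ)
          = ((k : ℝ) + 1) * (Real.Gamma (ν + 1) * k.factorial) := by
            rw [Nat.factorial_succ]; push_cast; ring
        _ ≤ (ν + k + 1) * Real.Gamma (ν + k + 1) := hk

lemma tendsto_bessel_sum (ν : ℝ) (hν : 0 ≤ ν) :
    Filter.Tendsto
      (fun t : ℝ => ∑' k : ℕ,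
        ((-1 : ℝ) ^ k / (k.factorial * Real.Gamma (ν + k + 1))) * t ^ (2 * k))
      (𝓝 0) (𝓝 (1 / Real.Gamma (ν + 1))) := by
  have hΓpos : 0 < Real.Gamma (ν + 1) := Real.Gamma_pos_of_pos (by linarith)
  have hΓk : ∀ k : ℕ, 0 < Real.Gamma (ν + k + 1) := fun k =>
    Real.Gamma_pos_of_pos (by positivity)
  set u : ℕ → ℝ := fun k => (1 / Real.Gamma (ν + 1)) * (1 ^ k / k.factorial) with hu_def
  have hu : Summable u := (Real.summable_pow_div_factorial 1).mul_left _
  have hcont : ContinuousOn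
      (fun t : ℝ => ∑' k : ℕ,
        ((-1 : ℝ) ^ k / (k.factorial * Real.Gamma (ν + k + 1))) * t ^ (2 * k))
      (Metric.ball (0 : ℝ) 1) := by
    apply continuousOn_tsum (u := u)
    · intro k
      exact (continuous_const.mul (continuous_pow _)).continuousOn
    · exact hu
    · intro k t ht
      have ht1 : |t| < 1 := by simpa [Real.dist_eq] using Metric.mem_ball.mp ht
      have habs : |((-1 : ℝ) ^ k / (k.factorial * Real.Gamma (ν + k + 1))) * t ^ (2 * k)|
          ≤ 1 / (k.factorial * Real.Gamma (ν + k + 1)) := by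
        rw [abs_mul, abs_div, abs_pow, abs_neg, abs_one, one_pow, abs_pow]
        rw [abs_of_pos (by positivity : (0:ℝ) < (k.factorial : ℝ) * Real.Gamma (ν + k + 1))]
        have : |t| ^ (2 * k) ≤ 1 := pow_le_one₀ (abs_nonneg t) ht1.le
        calc 1 / ((k.factorial : ℝ) * Real.Gamma (ν + k + 1)) * |t| ^ (2 * k)
            ≤ 1 / ((k.factorial : ℝ) * Real.Gamma (ν + k + 1)) * 1 := by
              apply mul_le_mul_of_nonneg_left this (by positivity)
          _ = 1 / ((k.factorial : ℝ) * Real.Gamma (ν + k + 1)) := mul_one _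
      refine le_trans habs ?_
      have hle : Real.Gamma (ν + 1) * k.factorial ≤ (k.factorial : ℝ) * Real.Gamma (ν + k + 1) := by
        rw [mul_comm (k.factorial : ℝ)]
        calc Real.Gamma (ν + 1) * (k.factorial : ℝ) ≤ Real.Gamma (ν + k + 1) * 1 := by
              rw [mul_one]; exact gamma_fact_le ν hν k
          _ ≤ Real.Gamma (ν + k + 1) * (k.factorial : ℝ) := by
              apply mul_le_mul_of_nonneg_left (by exact_mod_cast k.factorial_pos) (hΓk k).le
      have : 1 / ((k.factorial : ℝ) * Real.Gamma (ν + k + 1))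
          ≤ 1 / (Real.Gamma (ν + 1) * k.factorial) :=
        one_div_le_one_div_of_le (by positivity) hle
      calc (1:ℝ) / ((k.factorial : ℝ) * Real.Gamma (ν + k + 1))
          ≤ 1 / (Real.Gamma (ν + 1) * k.factorial) := this
        _ = u k := by simp [hu_def]; ring
  have hmem : Metric.ball (0 : ℝ) 1 ∈ 𝓝 (0 : ℝ) := Metric.ball_mem_nhds _ one_pos
  have hca := hcont.continuousAt hmem
  have hval : ∑' k : ℕ,
      ((-1 : ℝ) ^ k / (k.factorial * Real.Gamma (ν + k + 1))) * (0:ℝ) ^ (2 * k)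
      = 1 / Real.Gamma (ν + 1) := by
    rw [tsum_eq_single 0]
    · simp
    · intro k hk
      have : 2 * k ≠ 0 := by omega
      simp [zero_pow this]
  simpa [ContinuousAt, hval] using hca

/-- The volume of the Euclidean `n`-ball of radius `R` is `R^n π^{n/2} / Γ(n/2+1)`, and this
equals the limit as `r = ‖v‖ → 0⁺` of `R^{n/2} J_{n/2}(2πRr) / r^{n/2}`. -/
theorem volume_ball_eq_bessel_limit (n : ℕ) (hn : 1 ≤ n) (R : ℝ) (hR : 0 < R) :
    (volume (Metric.closedBall (0 : EuclideanSpace ℝ (Fin n)) R)).toReal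
        = R ^ n * Real.pi ^ ((n : ℝ) / 2) / Real.Gamma ((n : ℝ) / 2 + 1) ∧
    Filter.Tendsto
      (fun r : ℝ => R ^ ((n : ℝ) / 2) * besselJ ((n : ℝ) / 2) (2 * Real.pi * R * r)
          / r ^ ((n : ℝ) / 2))
      (𝓝[>] 0)
      (𝓝 (R ^ n * Real.pi ^ ((n : ℝ) / 2) / Real.Gamma ((n : ℝ) / 2 + 1))) := by
  set ν : ℝ := (n : ℝ) / 2 with hν_def
  have hν : 0 ≤ ν := by positivity
  have hΓpos : 0 < Real.Gamma (ν + 1) := Real.Gamma_pos_of_pos (by linarith)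
  have hsqrt : Real.sqrt π ^ n = π ^ ν := by
    rw [Real.sqrt_eq_rpow, ← Real.rpow_natCast (π ^ ((1:ℝ)/2)) n,
      ← Real.rpow_mul Real.pi_pos.le, hν_def]
    congr 1
    ring
  constructor
  · haveI : Nonempty (Fin n) := ⟨⟨0, hn⟩⟩
    rw [EuclideanSpace.volume_closedBall]
    simp only [Fintype.card_fin]
    rw [ENNReal.toReal_mul, ENNReal.toReal_pow, ENNReal.toReal_ofReal hR.le,
      ENNReal.toReal_ofReal (by positivity)]
    rw [hsqrt, mul_div_assoc]
  · -- limit part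
    have hS := tendsto_bessel_sum ν hν
    have hcomp : Filter.Tendsto (fun r : ℝ => π * R * r) (𝓝[>] 0) (𝓝 0) := by
      have : Filter.Tendsto (fun r : ℝ => π * R * r) (𝓝 0) (𝓝 (π * R * 0)) :=
        (continuous_const.mul continuous_id).tendsto 0
      simpa using this.mono_left nhdsWithin_le_nhds
    have hS' := hS.comp hcomp
    have hmul : Filter.Tendsto
        (fun r : ℝ => (R ^ n * π ^ ν) * ∑' k : ℕ,
          ((-1 : ℝ) ^ k / (k.factorial * Real.Gamma (ν + k + 1))) * (π * R * r) ^ (2 * k))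
        (𝓝[>] 0) (𝓝 ((R ^ n * π ^ ν) * (1 / Real.Gamma (ν + 1)))) :=
      Filter.Tendsto.const_mul _ hS'
    have heq : (R ^ n * π ^ ν) * (1 / Real.Gamma (ν + 1))
        = R ^ n * π ^ ν / Real.Gamma (ν + 1) := by ring
    rw [heq] at hmul
    apply hmul.congr'
    filter_upwards [self_mem_nhdsWithin] with r hr
    have hrpos : (0:ℝ) < r := hr
    have hx : 2 * π * R * r / 2 = π * R * r := by ring
    have hπRr : 0 < π * R * r := by positivity
    rw [besselJ, hx]
    have hmulrpow : (π * R * r) ^ ν = π ^ ν * R ^ ν * r ^ ν := by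
      rw [Real.mul_rpow (by positivity) hrpos.le, Real.mul_rpow Real.pi_pos.le hR.le]
    have hRR : R ^ ν * R ^ ν = R ^ n := by
      rw [← Real.rpow_add hR, hν_def, ← Real.rpow_natCast R n]
      norm_num
    have hrne : (r : ℝ) ^ ν ≠ 0 := (Real.rpow_pos_of_pos hrpos ν).ne'
    field_simp [hmulrpow]
    rw [← hRR]
    rw [hmulrpow]
    ring
end

section
/- Let n ≥ 1. For any probability measure ν on 𝕋ⁿ, the ball discrepancy D(ν) = sup_{y, 0<R<1/2} |ν(B_R(y)) − μ(B_R)| satisfies D(ν) ≤ C · (D^box(ν))^{1/n}, where D^box(ν) is the supremum of |ν(Q) − μ(Q)| over all axis-parallel boxes Q = [a₁,b₁] × ⋯ × [aₙ,bₙ] ⊂ 𝕋ⁿ, and C depends only on n. -/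
open MeasureTheory

instance : Fact ((0:ℝ) < 1) := ⟨one_pos⟩

/-- The Euclidean (geodesic) distance on the torus `𝕋ⁿ`. -/
noncomputable def torusDist {n : ℕ} (t y : Fin n → AddCircle (1:ℝ)) : ℝ :=
  Real.sqrt (∑ j, ‖t j - y j‖ ^ 2)

/-- The closed geodesic Euclidean ball of radius `R` centered at `y` in `𝕋ⁿ`. -/
def torusBall {n : ℕ} (y : Fin n → AddCircle (1:ℝ)) (R : ℝ) :
    Set (Fin n → AddCircle (1:ℝ)) :=
  {t | torusDist t y ≤ R}

/-- The axis-parallel box `[a₁,b₁] × ⋯ × [aₙ,bₙ] ⊆ 𝕋ⁿ`. -/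
def torusBox {n : ℕ} (a b : Fin n → ℝ) : Set (Fin n → AddCircle (1:ℝ)) :=
  {t | ∀ i, ∃ x : ℝ, a i ≤ x ∧ x ≤ b i ∧ ((x : AddCircle (1:ℝ)) = t i)}

/-- The Lebesgue volume of a Euclidean `n`-ball of radius `R`. -/
noncomputable def ballVol (n : ℕ) (R : ℝ) : ℝ :=
  (volume (Metric.closedBall (0 : EuclideanSpace ℝ (Fin n)) R)).toReal

section aux
lemma dj_le_abs {k : ℤ} {v : ℝ} (h1 : (k:ℝ) ≤ v) (h2 : v < k+1) :
    max (max (k:ℝ) (-(k:ℝ)-1)) 0 ≤ |v| := by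
  rcases abs_cases v with ⟨h3, h4⟩ | ⟨h3, h4⟩ <;>
    simp only [max_le_iff] <;> refine ⟨⟨?_, ?_⟩, ?_⟩ <;> linarith

lemma abs_le_Dj {k : ℤ} {v : ℝ} (h1 : (k:ℝ) ≤ v) (h2 : v < k+1) :
    |v| ≤ max ((k:ℝ)+1) (-(k:ℝ)) := by
  rcases abs_cases v with ⟨h3, h4⟩ | ⟨h3, h4⟩ <;> simp only [le_max_iff]
  · left; linarith
  · right; linarith

lemma Dj_le_abs_add {k : ℤ} {v : ℝ} (h1 : (k:ℝ) ≤ v) (h2 : v < k+1) :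
    max ((k:ℝ)+1) (-(k:ℝ)) ≤ |v| + 1 := by
  rcases abs_cases v with ⟨h3, h4⟩ | ⟨h3, h4⟩ <;>
    simp only [max_le_iff] <;> constructor <;> linarith

lemma abs_le_dj_add {k : ℤ} {v : ℝ} (h1 : (k:ℝ) ≤ v) (h2 : v < k+1) :
    |v| ≤ max (max (k:ℝ) (-(k:ℝ)-1)) 0 + 1 := by
  have hk : (k:ℝ) ≤ max (max (k:ℝ) (-(k:ℝ)-1)) 0 := le_max_of_le_left (le_max_left _ _)
  have hk2 : (-(k:ℝ)-1) ≤ max (max (k:ℝ) (-(k:ℝ)-1)) 0 := le_max_of_le_left (le_max_right _ _)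
  rcases abs_cases v with ⟨h3, h4⟩ | ⟨h3, h4⟩ <;> linarith

lemma pow_sub_pow_le (n : ℕ) {a b : ℝ} (hb : 0 ≤ b) (hab : b ≤ a) (ha : a ≤ 1) :
    a^n - b^n ≤ n * (a - b) := by
  induction n with
  | zero => simp
  | succ k ih =>
    have h5 : (0:ℝ) ≤ a := le_trans hb hab
    have h4 : (0:ℝ) ≤ a - b := by linarith
    have hbk1 : b^k ≤ 1 := pow_le_one₀ hb (hab.trans ha)
    have e1 : a*(a^k - b^k) ≤ a*((k:ℝ)*(a-b)) := mul_le_mul_of_nonneg_left ih h5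
    have e2 : a*((k:ℝ)*(a-b)) ≤ 1*((k:ℝ)*(a-b)) :=
      mul_le_mul_of_nonneg_right ha (by positivity)
    have e3 : b^k*(a-b) ≤ 1*(a-b) := mul_le_mul_of_nonneg_right hbk1 h4
    rw [pow_succ, pow_succ]
    push_cast
    nlinarith [e1, e2, e3]
end aux

lemma sqrt_le_iff_sq {s r : ℝ} (hs : 0 ≤ s) (hr : 0 ≤ r) : Real.sqrt s ≤ r ↔ s ≤ r^2 := by
  constructor
  · intro h
    have h2 : Real.sqrt s ^ 2 ≤ r ^ 2 := by
      have := Real.sqrt_nonneg s; nlinarith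
    rwa [Real.sq_sqrt hs] at h2
  · intro h
    rw [show r = Real.sqrt (r^2) by rw [Real.sqrt_sq hr]]
    exact Real.sqrt_le_sqrt h

lemma vol_sumsq (n : ℕ) (w : Fin n → ℝ) (r : ℝ) (hr : 0 ≤ r) :
    volume {x : Fin n → ℝ | ∑ j, (x j - w j)^2 ≤ r^2}
      = ENNReal.ofReal (r^n) * volume (Metric.closedBall (0:EuclideanSpace ℝ (Fin n)) 1) := by
  have hmp := EuclideanSpace.volume_preserving_symm_measurableEquiv_toLp (Fin n)
  have hS : MeasurableSet {x : Fin n → ℝ | ∑ j, (x j - w j)^2 ≤ r^2} := by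
    apply measurableSet_le (by fun_prop) measurable_const
  have key : ((MeasurableEquiv.toLp 2 (Fin n → ℝ)).symm) ⁻¹' {x : Fin n → ℝ | ∑ j, (x j - w j)^2 ≤ r^2}
      = Metric.closedBall ((MeasurableEquiv.toLp 2 (Fin n → ℝ)) w) r := by
    ext p
    simp only [Set.mem_preimage, Set.mem_setOf_eq, Metric.mem_closedBall, EuclideanSpace.dist_eq]
    have h1 : ∀ j, ((MeasurableEquiv.toLp 2 (Fin n → ℝ)).symm) p j = p j := fun j => rfl
    have h2 : ∀ j, ((MeasurableEquiv.toLp 2 (Fin n → ℝ)) w) j = w j := fun j => rfl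
    simp_rw [h1, h2, Real.dist_eq, sq_abs]
    exact (sqrt_le_iff_sq (by positivity) hr).symm
  rw [← hmp.measure_preimage hS.nullMeasurableSet, key, Measure.addHaar_closedBall' _ _ hr,
    finrank_euclideanSpace_fin]

lemma circ_rep (z : AddCircle (1:ℝ)) :
    ∃ u : ℝ, -(1/2) ≤ u ∧ u < 1/2 ∧ ((u : AddCircle (1:ℝ)) = z) ∧ ‖z‖ = |u| := by
  obtain ⟨u₀, rfl⟩ := QuotientAddGroup.mk_surjective z
  have hcoe : ((u₀ - (round u₀ : ℝ) : ℝ) : AddCircle (1:ℝ)) = (u₀ : AddCircle (1:ℝ)) := by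
    have h0 : (((round u₀ : ℝ)) : AddCircle (1:ℝ)) = 0 := by
      rw [AddCircle.coe_eq_zero_iff]; exact ⟨round u₀, by simp⟩
    rw [QuotientAddGroup.mk_sub (AddSubgroup.zmultiples (1:ℝ)) u₀ ((round u₀ : ℝ)), h0, sub_zero]
  have hf := Int.floor_le (u₀ + 1/2)
  have hf2 := Int.lt_floor_add_one (u₀ + 1/2)
  have hb1 : -(1/2) ≤ u₀ - round u₀ := by rw [round_eq]; push_cast; linarith
  have hb2 : u₀ - round u₀ < 1/2 := by rw [round_eq]; push_cast; linarith
  refine ⟨u₀ - round u₀, hb1, hb2, hcoe, ?_⟩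
  rw [← hcoe, AddCircle.norm_eq]
  have hr0 : round (u₀ - (round u₀:ℝ)) = 0 := by
    rw [round_eq, Int.floor_eq_zero_iff]
    constructor <;> [skip; skip] <;> norm_num <;> linarith
  norm_num [hr0]

lemma coe_add_circ (a b : ℝ) : ((a + b : ℝ) : AddCircle (1:ℝ)) = (a : AddCircle (1:ℝ)) + b :=
  QuotientAddGroup.mk_add _ a b

lemma measurableSet_torusBox {n : ℕ} (a b : Fin n → ℝ) : MeasurableSet (torusBox a b) := by
  have : torusBox a b =
      Set.pi Set.univ (fun i => (fun x : ℝ => (x : AddCircle (1:ℝ))) '' Set.Icc (a i) (b i)) := by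
    ext t
    simp only [torusBox, Set.mem_setOf_eq, Set.mem_pi, Set.mem_univ, forall_true_left,
      Set.mem_image, Set.mem_Icc]
    exact ⟨fun h i => by obtain ⟨x, h1, h2, h3⟩ := h i; exact ⟨x, ⟨h1, h2⟩, h3⟩,
      fun h i => by obtain ⟨x, ⟨h1, h2⟩, h3⟩ := h i; exact ⟨x, h1, h2, h3⟩⟩
  rw [this]
  exact MeasurableSet.univ_pi fun i =>
    ((isCompact_Icc.image (AddCircle.continuous_mk' (1:ℝ))).isClosed).measurableSet

lemma measurableSet_torusBall {n : ℕ} (y : Fin n → AddCircle (1:ℝ)) (R : ℝ) :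
    MeasurableSet (torusBall y R) := by
  have : Continuous fun t : Fin n → AddCircle (1:ℝ) => torusDist t y := by
    unfold torusDist
    apply Real.continuous_sqrt.comp
    exact continuous_finset_sum _ fun j _ =>
      ((continuous_apply j).sub continuous_const).norm.pow 2
  exact (isClosed_le this continuous_const).measurableSet

lemma prod_ite_eq_mul_pow {M : Type*} [CommMonoid M] {n : ℕ} (i0 : Fin n) (s t : M) :
    (∏ j : Fin n, (if j = i0 then s else t)) = s * t^(n-1) := by
  rw [← Finset.prod_erase_mul Finset.univ _ (Finset.mem_univ i0)]
  rw [if_pos rfl, mul_comm]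
  congr 1
  rw [Finset.prod_congr rfl (fun j hj => if_neg (Finset.mem_erase.1 hj).1), Finset.prod_const,
    Finset.card_erase_of_mem (Finset.mem_univ i0), Finset.card_univ, Fintype.card_fin]

set_option maxHeartbeats 4000000 in
lemma core (n K : ℕ) (hn : 1 ≤ n) (hK : n ≤ K)
    (ν : Measure (Fin n → AddCircle (1:ℝ))) [IsProbabilityMeasure ν]
    (Dbox : ℝ) (hD : 0 ≤ Dbox)
    (hbox : ∀ a b : Fin n → ℝ, (∀ i, a i ≤ b i) → (∀ i, b i ≤ a i + 1) →
      |(ν (torusBox a b)).toReal - ∏ i, (b i - a i)| ≤ Dbox)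
    (y : Fin n → AddCircle (1:ℝ)) (R : ℝ) (hR0 : 0 < R) (hRh : R < 1/2) :
    |(ν (torusBall y R)).toReal - ballVol n R| ≤
      ballVol n 1 * n * Real.sqrt n / (2*K) + 2 * (2*(K:ℝ))^(n-1) * Dbox := by
  classical
  -- basic numbers
  set v : ℝ := ballVol n 1 with hv
  have hv0 : 0 ≤ v := ENNReal.toReal_nonneg
  have hK1 : 1 ≤ K := le_trans hn hK
  set m : ℝ := 2*(K:ℝ) with hm
  have hm0 : (0:ℝ) < m := by
    have : (1:ℝ) ≤ (K:ℝ) := by exact_mod_cast hK1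
    simp only [hm]; linarith
  have hm2 : (2:ℝ) ≤ m := by
    have : (1:ℝ) ≤ (K:ℝ) := by exact_mod_cast hK1
    simp only [hm]; linarith
  set δ : ℝ := Real.sqrt n / m with hδdef
  have hsn0 : 0 < Real.sqrt n := Real.sqrt_pos.2 (by exact_mod_cast hn)
  have hδ0 : 0 < δ := div_pos hsn0 hm0
  have hsn_le : Real.sqrt n ≤ (n:ℝ) := by
    have h1 : (1:ℝ) ≤ (n:ℝ) := by exact_mod_cast hn
    nlinarith [Real.sq_sqrt (by positivity : (0:ℝ) ≤ (n:ℝ)), Real.sqrt_nonneg (n:ℝ)]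
  have hδhalf : δ ≤ 1/2 := by
    rw [hδdef, div_le_iff₀ hm0]
    have : (n:ℝ) ≤ (K:ℝ) := by exact_mod_cast hK
    simp only [hm]; linarith [hsn_le]
  have hδsq : δ^2 = (n:ℝ)/m^2 := by
    rw [hδdef, div_pow, Real.sq_sqrt (by positivity : (0:ℝ) ≤ (n:ℝ))]
  -- center lift
  have hwex : ∀ j, ∃ x : ℝ, (x : AddCircle (1:ℝ)) = y j :=
    fun j => QuotientAddGroup.mk_surjective (y j)
  choose w hw using hwex
  set i0 : Fin n := ⟨0, hn⟩ with hi0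
  -- columns
  set S : Finset (Fin n → ℤ) :=
    Fintype.piFinset (fun j => if j = i0 then ({0} : Finset ℤ)
      else Finset.Ico (-(K:ℤ)) (K:ℤ)) with hS
  have cardS : (S.card : ℝ) = m^(n-1) := by
    rw [hS, Fintype.card_piFinset]
    have : ∀ j : Fin n, ((if j = i0 then ({0} : Finset ℤ) else Finset.Ico (-(K:ℤ)) (K:ℤ)).card)
        = if j = i0 then 1 else 2*K := by
      intro j; split_ifs with hj
      · simp
      · rw [Int.card_Ico]; omega
    rw [Finset.prod_congr rfl (fun j _ => this j), prod_ite_eq_mul_pow i0 1 (2*K), one_mul]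
    push_cast [hm]
    ring
  have hone : (S.card : ℝ) * (1/m)^(n-1) = 1 := by
    rw [cardS, ← mul_pow, mul_one_div_cancel hm0.ne', one_pow]
  -- column quantities
  set dsq : (Fin n → ℤ) → ℝ :=
    fun c => ∑ j ∈ Finset.univ.erase i0, (max (max ((c j:ℝ)) (-(c j:ℝ)-1)) 0 / m)^2 with hdsq
  set Dsq : (Fin n → ℤ) → ℝ :=
    fun c => ∑ j ∈ Finset.univ.erase i0, (max ((c j:ℝ)+1) (-(c j:ℝ)) / m)^2 with hDsq
  set hcol : (Fin n → ℤ) → ℝ := fun c => Real.sqrt (max 0 (R^2 - dsq c)) with hhcol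
  set gcol : (Fin n → ℤ) → ℝ := fun c => Real.sqrt (max 0 (R^2 - Dsq c)) with hgcol
  have dsq0 : ∀ c, 0 ≤ dsq c := fun c => Finset.sum_nonneg fun j _ => sq_nonneg _
  have Dsq0 : ∀ c, 0 ≤ Dsq c := fun c => Finset.sum_nonneg fun j _ => sq_nonneg _
  have hcol0 : ∀ c, 0 ≤ hcol c := fun c => Real.sqrt_nonneg _
  have gcol0 : ∀ c, 0 ≤ gcol c := fun c => Real.sqrt_nonneg _
  have hcolR : ∀ c, hcol c ≤ R := by
    intro c
    rw [hhcol]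
    calc Real.sqrt (max 0 (R^2 - dsq c)) ≤ Real.sqrt (R^2) := by
          apply Real.sqrt_le_sqrt; rw [max_le_iff]; constructor <;> nlinarith [dsq0 c]
    _ = R := Real.sqrt_sq hR0.le
  have gcolR : ∀ c, gcol c ≤ R := by
    intro c
    rw [hgcol]
    calc Real.sqrt (max 0 (R^2 - Dsq c)) ≤ Real.sqrt (R^2) := by
          apply Real.sqrt_le_sqrt; rw [max_le_iff]; constructor <;> nlinarith [Dsq0 c]
    _ = R := Real.sqrt_sq hR0.le
  -- boxes
  set aO : (Fin n → ℤ) → Fin n → ℝ :=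
    fun c j => if j = i0 then w i0 - hcol c else w j + (c j : ℝ)/m with haO
  set bO : (Fin n → ℤ) → Fin n → ℝ :=
    fun c j => if j = i0 then w i0 + hcol c else w j + ((c j : ℝ)+1)/m with hbO
  set aL : (Fin n → ℤ) → Fin n → ℝ :=
    fun c j => if j = i0 then w i0 - 1/2 else w j + (c j : ℝ)/m with haL
  set bL : (Fin n → ℤ) → Fin n → ℝ :=
    fun c j => if j = i0 then w i0 - gcol c else w j + ((c j : ℝ)+1)/m with hbL
  set aR : (Fin n → ℤ) → Fin n → ℝ :=
    fun c j => if j = i0 then w i0 + gcol c else w j + (c j : ℝ)/m with haR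
  set bR : (Fin n → ℤ) → Fin n → ℝ :=
    fun c j => if j = i0 then w i0 + 1/2 else w j + ((c j : ℝ)+1)/m with hbR
  -- the measure of the ball is finite etc.
  have hν1 : (ν (torusBall y R)).toReal ≤ 1 := by
    have h : ν (torusBall y R) ≤ ν Set.univ := measure_mono (Set.subset_univ _)
    have h2 := ENNReal.toReal_mono (measure_ne_top ν Set.univ) h
    simpa [measure_univ] using h2
  have hν0 : 0 ≤ (ν (torusBall y R)).toReal := ENNReal.toReal_nonneg
  have repcol : ∀ t : Fin n → AddCircle (1:ℝ), ∃ u : Fin n → ℝ, ∃ c : Fin n → ℤ,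
      (∀ j, -(1/2) ≤ u j ∧ u j < 1/2) ∧ (∀ j, ((w j + u j : ℝ) : AddCircle (1:ℝ)) = t j) ∧
      (∀ j, ‖t j - y j‖ = |u j|) ∧ c ∈ S ∧
      (∀ j, j ≠ i0 → (c j : ℝ) ≤ u j * m ∧ u j * m < c j + 1) := by
    intro t
    choose u h1 h2 h3 h4 using fun j => circ_rep (t j - y j)
    refine ⟨u, fun j => if j = i0 then 0 else ⌊u j * m⌋, fun j => ⟨h1 j, h2 j⟩, ?_, h4, ?_, ?_⟩
    · intro j
      rw [coe_add_circ, hw j, h3 j]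
      abel
    · rw [Fintype.mem_piFinset]
      intro j
      by_cases hj : j = i0
      · simp [hj]
      · simp only [if_neg hj]
        rw [Finset.mem_Ico]
        constructor
        · rw [Int.le_floor]
          push_cast
          have h5 := mul_le_mul_of_nonneg_right (h1 j) hm0.le
          have h6 : -(1/2) * m = -(K:ℝ) := by rw [hm]; ring
          linarith
        · rw [Int.floor_lt]
          push_cast
          have h5 := mul_lt_mul_of_pos_right (h2 j) hm0
          have h6 : (1/2) * m = (K:ℝ) := by rw [hm]; ring
          linarith
    · intro j hj
      simp only [if_neg hj]
      exact ⟨Int.floor_le _, Int.lt_floor_add_one _⟩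
  have coverO : torusBall y R ⊆ ⋃ c ∈ S, torusBox (aO c) (bO c) := by
    intro t ht
    obtain ⟨u, c, hu12, hcoe, hnorm, hcS, hfl⟩ := repcol t
    have hsum : ∑ j, (u j)^2 ≤ R^2 := by
      have h0 : Real.sqrt (∑ j, ‖t j - y j‖^2) ≤ R := ht
      have h1 := (sqrt_le_iff_sq (Finset.sum_nonneg fun j _ => sq_nonneg _) hR0.le).1 h0
      calc ∑ j, (u j)^2 = ∑ j, ‖t j - y j‖^2 :=
            Finset.sum_congr rfl fun j _ => by rw [hnorm j, sq_abs]
      _ ≤ R^2 := h1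
    have hsplit : (∑ j ∈ Finset.univ.erase i0, (u j)^2) + (u i0)^2 = ∑ j, (u j)^2 :=
      Finset.sum_erase_add _ _ (Finset.mem_univ i0)
    have hdle : dsq c ≤ ∑ j ∈ Finset.univ.erase i0, (u j)^2 := by
      rw [hdsq]
      apply Finset.sum_le_sum
      intro j hj
      have hj' : j ≠ i0 := (Finset.mem_erase.1 hj).1
      obtain ⟨hl, hr⟩ := hfl j hj'
      have h2 : max (max ((c j:ℝ)) (-(c j:ℝ)-1)) 0 ≤ |u j| * m := by
        have := dj_le_abs hl hr
        rwa [abs_mul, abs_of_pos hm0] at this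
      have h4 : max (max ((c j:ℝ)) (-(c j:ℝ)-1)) 0 / m ≤ |u j| := by
        rw [div_le_iff₀ hm0]
        linarith
      have h5 : (0:ℝ) ≤ max (max ((c j:ℝ)) (-(c j:ℝ)-1)) 0 / m :=
        div_nonneg (le_max_right _ _) hm0.le
      calc (max (max ((c j:ℝ)) (-(c j:ℝ)-1)) 0 / m)^2 ≤ |u j|^2 := by
            apply pow_le_pow_left₀ h5 h4
      _ = (u j)^2 := sq_abs _
    have hui0 : |u i0| ≤ hcol c := by
      have key : (u i0)^2 ≤ max 0 (R^2 - dsq c) := le_max_of_le_right (by linarith)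
      calc |u i0| = Real.sqrt ((u i0)^2) := (Real.sqrt_sq_eq_abs _).symm
      _ ≤ Real.sqrt (max 0 (R^2 - dsq c)) := Real.sqrt_le_sqrt key
      _ = hcol c := by rw [hhcol]
    rw [Set.mem_iUnion₂]
    refine ⟨c, hcS, fun i => ⟨w i + u i, ?_, ?_, hcoe i⟩⟩
    · by_cases hi : i = i0
      · subst hi
        simp only [haO, if_pos rfl]
        linarith [(abs_le.1 hui0).1]
      · simp only [haO, if_neg hi]
        have h7 : (c i : ℝ)/m ≤ u i := by
          rw [div_le_iff₀ hm0]
          linarith [(hfl i hi).1]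
        linarith
    · by_cases hi : i = i0
      · subst hi
        simp only [hbO, if_pos rfl]
        linarith [(abs_le.1 hui0).2]
      · simp only [hbO, if_neg hi]
        have h7 : u i ≤ ((c i : ℝ)+1)/m := by
          rw [le_div_iff₀ hm0]
          linarith [(hfl i hi).2]
        linarith
  have stepAboxes : ∀ c ∈ S,
      (ν (torusBox (aO c) (bO c))).toReal ≤ 2 * hcol c * (1/m)^(n-1) + Dbox := by
    intro c _
    have hab : ∀ i, aO c i ≤ bO c i := by
      intro i
      by_cases hi : i = i0
      · subst hi; simp only [haO, hbO, if_pos rfl]; linarith [hcol0 c]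
      · simp only [haO, hbO, if_neg hi]
        have hcc : (c i:ℝ)/m ≤ ((c i:ℝ)+1)/m := (div_le_div_iff_of_pos_right hm0).2 (by linarith)
        linarith
    have hba : ∀ i, bO c i ≤ aO c i + 1 := by
      intro i
      by_cases hi : i = i0
      · subst hi; simp only [haO, hbO, if_pos rfl]; linarith [hcolR c]
      · simp only [haO, hbO, if_neg hi]
        have h1 : ((c i:ℝ)+1)/m = (c i:ℝ)/m + 1/m := by ring
        have h2 : 1/m ≤ 1 := by rw [div_le_one hm0]; linarith
        linarith
    have hprod : (∏ i, (bO c i - aO c i)) = 2 * hcol c * (1/m)^(n-1) := by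
      have heq : ∀ i : Fin n, bO c i - aO c i = if i = i0 then 2 * hcol c else 1/m := by
        intro i
        simp only [haO, hbO]
        split_ifs with hi <;> ring
      rw [Finset.prod_congr rfl fun i _ => heq i, prod_ite_eq_mul_pow]
    have hb := hbox (aO c) (bO c) hab hba
    rw [hprod] at hb
    linarith [(abs_le.1 hb).2]
  have stepA : (ν (torusBall y R)).toReal ≤
      (∑ c ∈ S, 2 * hcol c * (1/m)^(n-1)) + (S.card : ℝ) * Dbox := by
    have h1 : ν (torusBall y R) ≤ ∑ c ∈ S, ν (torusBox (aO c) (bO c)) :=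
      (measure_mono coverO).trans (measure_biUnion_finset_le S _)
    have hne : (∑ c ∈ S, ν (torusBox (aO c) (bO c))) ≠ ⊤ := by
      rw [ENNReal.sum_ne_top]
      exact fun c _ => measure_ne_top ν _
    have h2 : (ν (torusBall y R)).toReal ≤ ∑ c ∈ S, (ν (torusBox (aO c) (bO c))).toReal := by
      rw [← ENNReal.toReal_sum (fun c _ => measure_ne_top ν _)]
      exact ENNReal.toReal_mono hne h1
    calc (ν (torusBall y R)).toReal
        ≤ ∑ c ∈ S, (ν (torusBox (aO c) (bO c))).toReal := h2
    _ ≤ ∑ c ∈ S, (2 * hcol c * (1/m)^(n-1) + Dbox) := Finset.sum_le_sum stepAboxes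
    _ = (∑ c ∈ S, 2 * hcol c * (1/m)^(n-1)) + (S.card : ℝ) * Dbox := by
        rw [Finset.sum_add_distrib, Finset.sum_const, nsmul_eq_mul]
  have memS : ∀ u : Fin n → ℝ, (∀ j, -(1/2) ≤ u j ∧ u j < 1/2) →
      (fun j => if j = i0 then (0:ℤ) else ⌊u j * m⌋) ∈ S := by
    intro u hu
    rw [Fintype.mem_piFinset]
    intro j
    by_cases hj : j = i0
    · simp [hj]
    · simp only [if_neg hj]
      rw [Finset.mem_Ico]
      constructor
      · rw [Int.le_floor]
        push_cast
        have h5 := mul_le_mul_of_nonneg_right (hu j).1 hm0.le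
        have h6 : -(1/2) * m = -(K:ℝ) := by rw [hm]; ring
        linarith
      · rw [Int.floor_lt]
        push_cast
        have h5 := mul_lt_mul_of_pos_right (hu j).2 hm0
        have h6 : (1/2) * m = (K:ℝ) := by rw [hm]; ring
        linarith
  have hterm_expand : ∀ (f : Fin n → ℝ),
      ∑ j ∈ Finset.univ.erase i0, (f j + 1/m)^2
        = (∑ j ∈ Finset.univ.erase i0, (f j)^2) + 2/m * (∑ j ∈ Finset.univ.erase i0, f j)
          + (n-1) * (1/m)^2 := by
    intro f
    have h1 : ∀ j, (f j + 1/m)^2 = (f j)^2 + (2/m) * f j + (1/m)^2 := by intro j; ring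
    rw [Finset.sum_congr rfl fun j _ => h1 j, Finset.sum_add_distrib, Finset.sum_add_distrib,
      Finset.sum_const, ← Finset.mul_sum, nsmul_eq_mul,
      Finset.card_erase_of_mem (Finset.mem_univ i0), Finset.card_univ, Fintype.card_fin]
    push_cast [Nat.cast_sub hn]
    ring
  have hcard_erase : ((Finset.univ.erase i0).card : ℝ) = (n:ℝ) - 1 := by
    rw [Finset.card_erase_of_mem (Finset.mem_univ i0), Finset.card_univ, Fintype.card_fin]
    push_cast [Nat.cast_sub hn]
    ring
  have stepB : (∑ c ∈ S, 2 * hcol c * (1/m)^(n-1)) ≤ (R+δ)^n * v := by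
    set Bout : Set (Fin n → ℝ) := {x | ∑ j, (x j - w j)^2 ≤ (R+δ)^2} with hBoutdef
    set F : Set (Fin n → ℝ) := Set.pi Set.univ (fun j => Set.Ico (w j - 1/2) (w j + 1/2)) with hFdef
    set eL : (Fin n → ℤ) → Set (Fin n → ℝ) := fun c =>
      Set.pi Set.univ (fun j => Set.Icc (if j = i0 then w i0 - 1/2 else w j + (c j:ℝ)/m)
        (if j = i0 then w i0 - hcol c else w j + ((c j:ℝ)+1)/m)) with heL
    set eR : (Fin n → ℤ) → Set (Fin n → ℝ) := fun c =>
      Set.pi Set.univ (fun j => Set.Icc (if j = i0 then w i0 + hcol c else w j + (c j:ℝ)/m)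
        (if j = i0 then w i0 + 1/2 else w j + ((c j:ℝ)+1)/m)) with heR
    have coverF : F \ Bout ⊆ ⋃ c ∈ S, (eL c ∪ eR c) := by
      rintro x ⟨hxF, hxB⟩
      rw [hFdef, Set.mem_pi] at hxF
      have hu : ∀ j, -(1/2) ≤ x j - w j ∧ x j - w j < 1/2 := by
        intro j
        have := hxF j (Set.mem_univ j)
        rw [Set.mem_Ico] at this
        constructor <;> linarith [this.1, this.2]
      have hsum : (R+δ)^2 < ∑ j, (x j - w j)^2 := by
        rw [hBoutdef] at hxB
        exact lt_of_not_ge hxB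
      set c : Fin n → ℤ := fun j => if j = i0 then (0:ℤ) else ⌊(x j - w j) * m⌋ with hcdef
      have hcS : c ∈ S := memS _ hu
      have hfl : ∀ j, j ≠ i0 → (c j : ℝ) ≤ (x j - w j) * m ∧ (x j - w j) * m < c j + 1 := by
        intro j hj
        rw [hcdef]
        simp only [if_neg hj]
        exact ⟨Int.floor_le _, Int.lt_floor_add_one _⟩
      have hsplit : (∑ j ∈ Finset.univ.erase i0, (x j - w j)^2) + (x i0 - w i0)^2
          = ∑ j, (x j - w j)^2 := Finset.sum_erase_add _ _ (Finset.mem_univ i0)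
      -- show hcol c ≤ |x i0 - w i0|
      have hui0 : hcol c ≤ |x i0 - w i0| := by
        by_cases hd : R^2 - dsq c ≤ 0
        · have : hcol c = 0 := by
            simp only [hhcol, max_eq_left hd, Real.sqrt_zero]
          rw [this]
          exact abs_nonneg _
        · push_neg at hd
          -- Cauchy bound on the sum of dj
          set sd : ℝ := ∑ j ∈ Finset.univ.erase i0,
            (max (max ((c j:ℝ)) (-(c j:ℝ)-1)) 0 / m) with hsd
          have hsd0 : 0 ≤ sd := Finset.sum_nonneg fun j _ =>
            div_nonneg (le_max_right _ _) hm0.le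
          have hsd_sq : sd^2 ≤ ((n:ℝ)-1) * dsq c := by
            rw [hsd, hdsq]
            have := sq_sum_le_card_mul_sum_sq
              (s := Finset.univ.erase i0)
              (f := fun j => max (max ((c j:ℝ)) (-(c j:ℝ)-1)) 0 / m)
            calc (∑ j ∈ Finset.univ.erase i0, (max (max ((c j:ℝ)) (-(c j:ℝ)-1)) 0 / m))^2
                ≤ ((Finset.univ.erase i0).card : ℝ) *
                  ∑ j ∈ Finset.univ.erase i0, (max (max ((c j:ℝ)) (-(c j:ℝ)-1)) 0 / m)^2 := by
                  exact_mod_cast this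
            _ = ((n:ℝ)-1) * ∑ j ∈ Finset.univ.erase i0,
                  (max (max ((c j:ℝ)) (-(c j:ℝ)-1)) 0 / m)^2 := by rw [hcard_erase]
          have hdsqR : dsq c ≤ R^2 := by linarith
          have hsd_le : sd ≤ Real.sqrt n * R := by
            have h1 : sd^2 ≤ (n:ℝ) * R^2 := by
              have hn1 : ((n:ℝ)-1) ≤ (n:ℝ) := by linarith
              nlinarith [dsq0 c]
            have h2 : sd = Real.sqrt (sd^2) := (Real.sqrt_sq hsd0).symm
            rw [h2]
            calc Real.sqrt (sd^2) ≤ Real.sqrt ((n:ℝ) * R^2) := Real.sqrt_le_sqrt h1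
            _ = Real.sqrt n * R := by
                rw [Real.sqrt_mul (by positivity) _, Real.sqrt_sq hR0.le]
          have hterm : ∀ j ∈ Finset.univ.erase i0,
              (x j - w j)^2 ≤ (max (max ((c j:ℝ)) (-(c j:ℝ)-1)) 0 / m + 1/m)^2 := by
            intro j hj
            have hj' := (Finset.mem_erase.1 hj).1
            obtain ⟨hl, hr⟩ := hfl j hj'
            have h2 : |x j - w j| * m ≤ max (max ((c j:ℝ)) (-(c j:ℝ)-1)) 0 + 1 := by
              have := abs_le_dj_add hl hr
              rwa [abs_mul, abs_of_pos hm0] at this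
            have h4 : |x j - w j| ≤ max (max ((c j:ℝ)) (-(c j:ℝ)-1)) 0 / m + 1/m := by
              rw [← add_div, le_div_iff₀ hm0]
              linarith
            calc (x j - w j)^2 = |x j - w j|^2 := (sq_abs _).symm
            _ ≤ (max (max ((c j:ℝ)) (-(c j:ℝ)-1)) 0 / m + 1/m)^2 :=
                pow_le_pow_left₀ (abs_nonneg _) h4 2
          have hsum2 : ∑ j ∈ Finset.univ.erase i0, (x j - w j)^2
              ≤ dsq c + 2*R*δ + δ^2 := by
            calc ∑ j ∈ Finset.univ.erase i0, (x j - w j)^2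
                ≤ ∑ j ∈ Finset.univ.erase i0,
                  (max (max ((c j:ℝ)) (-(c j:ℝ)-1)) 0 / m + 1/m)^2 :=
                  Finset.sum_le_sum hterm
            _ = dsq c + 2/m * sd + ((n:ℝ)-1) * (1/m)^2 := by
                rw [hterm_expand (fun j => max (max ((c j:ℝ)) (-(c j:ℝ)-1)) 0 / m), hdsq, hsd]
            _ ≤ dsq c + 2*R*δ + δ^2 := by
                have h6 : 2/m * sd ≤ 2*R*δ := by
                  have := mul_le_mul_of_nonneg_left hsd_le (by positivity : (0:ℝ) ≤ 2/m)
                  calc 2/m * sd ≤ 2/m * (Real.sqrt n * R) := this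
                  _ = 2*R*δ := by rw [hδdef]; ring
                have h7 : ((n:ℝ)-1) * (1/m)^2 ≤ δ^2 := by
                  rw [hδsq]
                  have h8 : (0:ℝ) < m^2 := by positivity
                  have h9 : ((n:ℝ)-1) ≤ (n:ℝ) := by linarith
                  calc ((n:ℝ)-1) * (1/m)^2 = ((n:ℝ)-1) * (m^2)⁻¹ := by ring
                  _ ≤ (n:ℝ) * (m^2)⁻¹ :=
                      mul_le_mul_of_nonneg_right h9 (le_of_lt (inv_pos.2 h8))
                  _ = (n:ℝ)/m^2 := by ring
                linarith
          have hkey : (hcol c)^2 ≤ (x i0 - w i0)^2 := by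
            have hh2 : (hcol c)^2 = R^2 - dsq c := by
              rw [hhcol]
              simp only
              rw [Real.sq_sqrt (le_max_left _ _), max_eq_right hd.le]
            rw [hh2]
            nlinarith [hsum, hsplit, hsum2]
          calc hcol c = Real.sqrt ((hcol c)^2) := (Real.sqrt_sq (hcol0 c)).symm
          _ ≤ Real.sqrt ((x i0 - w i0)^2) := Real.sqrt_le_sqrt hkey
          _ = |x i0 - w i0| := Real.sqrt_sq_eq_abs _
      rw [Set.mem_iUnion₂]
      rcases le_or_gt 0 (x i0 - w i0) with hsgn | hsgn
      · refine ⟨c, hcS, Or.inr ?_⟩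
        rw [heR, Set.mem_pi]
        intro j _
        rw [Set.mem_Icc]
        by_cases hj : j = i0
        · rw [if_pos hj, if_pos hj, hj]
          rw [abs_of_nonneg hsgn] at hui0
          exact ⟨by linarith, by linarith [(hu i0).2]⟩
        · simp only [if_neg hj]
          obtain ⟨hl, hr⟩ := hfl j hj
          constructor
          · have : (c j : ℝ)/m ≤ x j - w j := by rw [div_le_iff₀ hm0]; linarith
            linarith
          · have : x j - w j ≤ ((c j : ℝ)+1)/m := by rw [le_div_iff₀ hm0]; linarith
            linarith
      · refine ⟨c, hcS, Or.inl ?_⟩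
        rw [heL, Set.mem_pi]
        intro j _
        rw [Set.mem_Icc]
        by_cases hj : j = i0
        · rw [if_pos hj, if_pos hj, hj]
          rw [abs_of_neg hsgn] at hui0
          exact ⟨by linarith [(hu i0).1], by linarith⟩
        · simp only [if_neg hj]
          obtain ⟨hl, hr⟩ := hfl j hj
          constructor
          · have : (c j : ℝ)/m ≤ x j - w j := by rw [div_le_iff₀ hm0]; linarith
            linarith
          · have : x j - w j ≤ ((c j : ℝ)+1)/m := by rw [le_div_iff₀ hm0]; linarith
            linarith
    -- volumes
    have hvolF : volume F = 1 := by
      rw [hFdef, volume_pi_pi]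
      have : ∀ j : Fin n, volume (Set.Ico (w j - 1/2) (w j + 1/2)) = 1 := by
        intro j
        rw [Real.volume_Ico]
        norm_num
      rw [Finset.prod_congr rfl fun j _ => this j, Finset.prod_const_one]
    have hVne : volume (Metric.closedBall (0:EuclideanSpace ℝ (Fin n)) 1) ≠ ⊤ :=
      measure_closedBall_lt_top.ne
    have hvolB : volume Bout = ENNReal.ofReal ((R+δ)^n * v) := by
      rw [hBoutdef, vol_sumsq n w (R+δ) (by linarith), ENNReal.ofReal_mul (by positivity)]
      congr 1
      rw [hv]
      unfold ballVol
      exact (ENNReal.ofReal_toReal hVne).symm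
    have hvol_slab : ∀ c : Fin n → ℤ,
        volume (eL c) = ENNReal.ofReal ((1/2 - hcol c) * (1/m)^(n-1)) ∧
        volume (eR c) = ENNReal.ofReal ((1/2 - hcol c) * (1/m)^(n-1)) := by
      intro c
      have hnn : ∀ i : Fin n, (0:ℝ) ≤ (if i = i0 then 1/2 - hcol c else 1/m) := by
        intro i
        split_ifs
        · linarith [hcolR c]
        · positivity
      constructor
      · rw [heL, volume_pi_pi]
        have h1 : ∀ j : Fin n, volume (Set.Icc (if j = i0 then w i0 - 1/2 else w j + (c j:ℝ)/m)
            (if j = i0 then w i0 - hcol c else w j + ((c j:ℝ)+1)/m))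
            = ENNReal.ofReal (if j = i0 then 1/2 - hcol c else 1/m) := by
          intro j
          rw [Real.volume_Icc]
          congr 1
          split_ifs with hj <;> ring
        rw [Finset.prod_congr rfl fun j _ => h1 j, ← ENNReal.ofReal_prod_of_nonneg
          (fun i _ => hnn i), prod_ite_eq_mul_pow]
      · rw [heR, volume_pi_pi]
        have h1 : ∀ j : Fin n, volume (Set.Icc (if j = i0 then w i0 + hcol c else w j + (c j:ℝ)/m)
            (if j = i0 then w i0 + 1/2 else w j + ((c j:ℝ)+1)/m))
            = ENNReal.ofReal (if j = i0 then 1/2 - hcol c else 1/m) := by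
          intro j
          rw [Real.volume_Icc]
          congr 1
          split_ifs with hj <;> ring
        rw [Finset.prod_congr rfl fun j _ => h1 j, ← ENNReal.ofReal_prod_of_nonneg
          (fun i _ => hnn i), prod_ite_eq_mul_pow]
    have hslab_nn : ∀ c : Fin n → ℤ, (0:ℝ) ≤ (1 - 2*hcol c) * (1/m)^(n-1) := by
      intro c
      have := hcolR c
      have h1 : (0:ℝ) ≤ 1 - 2*hcol c := by linarith
      positivity
    have hchain : (1:ENNReal) ≤ ENNReal.ofReal ((R+δ)^n * v +
        ∑ c ∈ S, ((1 - 2*hcol c) * (1/m)^(n-1))) := by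
      calc (1:ENNReal) = volume F := hvolF.symm
      _ ≤ volume (F ∩ Bout) + volume (F \ Bout) := measure_le_inter_add_diff volume F Bout
      _ ≤ volume Bout + ∑ c ∈ S, (volume (eL c) + volume (eR c)) := by
          apply add_le_add
          · exact measure_mono Set.inter_subset_right
          · exact (measure_mono coverF).trans ((measure_biUnion_finset_le S _).trans
              (Finset.sum_le_sum fun c _ => measure_union_le _ _))
      _ = ENNReal.ofReal ((R+δ)^n * v) +
          ∑ c ∈ S, ENNReal.ofReal ((1 - 2*hcol c) * (1/m)^(n-1)) := by
          rw [hvolB]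
          congr 1
          apply Finset.sum_congr rfl
          intro c _
          rw [(hvol_slab c).1, (hvol_slab c).2, ← ENNReal.ofReal_add
            (mul_nonneg (by linarith [hcolR c]) (by positivity))
            (mul_nonneg (by linarith [hcolR c]) (by positivity))]
          congr 1
          ring
      _ = ENNReal.ofReal ((R+δ)^n * v + ∑ c ∈ S, ((1 - 2*hcol c) * (1/m)^(n-1))) := by
          rw [← ENNReal.ofReal_sum_of_nonneg fun c _ => hslab_nn c,
            ← ENNReal.ofReal_add (by positivity) (Finset.sum_nonneg fun c _ => hslab_nn c)]
    have hreal : 1 ≤ (R+δ)^n * v + ∑ c ∈ S, ((1 - 2*hcol c) * (1/m)^(n-1)) :=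
      ENNReal.one_le_ofReal.1 hchain
    have hexp : ∑ c ∈ S, ((1 - 2*hcol c) * (1/m)^(n-1))
        = 1 - ∑ c ∈ S, 2 * hcol c * (1/m)^(n-1) := by
      have h5 : ∀ c : Fin n → ℤ, (1 - 2*hcol c) * (1/m)^(n-1)
          = (1/m)^(n-1) - 2 * hcol c * (1/m)^(n-1) := by intro c; ring
      rw [Finset.sum_congr rfl fun c _ => h5 c, Finset.sum_sub_distrib, Finset.sum_const,
        nsmul_eq_mul, hone]
    rw [hexp] at hreal
    linarith
  have coverC : (torusBall y R)ᶜ ⊆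
      ⋃ c ∈ S, (torusBox (aL c) (bL c) ∪ torusBox (aR c) (bR c)) := by
    intro t ht
    obtain ⟨u, c, hu12, hcoe, hnorm, hcS, hfl⟩ := repcol t
    have hsum : R^2 ≤ ∑ j, (u j)^2 := by
      have h0 : ¬ Real.sqrt (∑ j, ‖t j - y j‖^2) ≤ R := ht
      push_neg at h0
      have h1 : R^2 ≤ (Real.sqrt (∑ j, ‖t j - y j‖^2))^2 := by
        nlinarith [Real.sqrt_nonneg (∑ j, ‖t j - y j‖^2)]
      rw [Real.sq_sqrt (Finset.sum_nonneg fun j _ => sq_nonneg _)] at h1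
      calc R^2 ≤ ∑ j, ‖t j - y j‖^2 := h1
      _ = ∑ j, (u j)^2 := Finset.sum_congr rfl fun j _ => by rw [hnorm j, sq_abs]
    have hsplit : (∑ j ∈ Finset.univ.erase i0, (u j)^2) + (u i0)^2 = ∑ j, (u j)^2 :=
      Finset.sum_erase_add _ _ (Finset.mem_univ i0)
    have hDge : ∑ j ∈ Finset.univ.erase i0, (u j)^2 ≤ Dsq c := by
      rw [hDsq]
      apply Finset.sum_le_sum
      intro j hj
      have hj' := (Finset.mem_erase.1 hj).1
      obtain ⟨hl, hr⟩ := hfl j hj'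
      have h2 : |u j| * m ≤ max ((c j:ℝ)+1) (-(c j:ℝ)) := by
        have := abs_le_Dj hl hr
        rwa [abs_mul, abs_of_pos hm0] at this
      have h4 : |u j| ≤ max ((c j:ℝ)+1) (-(c j:ℝ)) / m := by
        rw [le_div_iff₀ hm0]; linarith
      calc (u j)^2 = |u j|^2 := (sq_abs _).symm
      _ ≤ (max ((c j:ℝ)+1) (-(c j:ℝ)) / m)^2 := pow_le_pow_left₀ (abs_nonneg _) h4 2
    have hui0 : gcol c ≤ |u i0| := by
      have key : max 0 (R^2 - Dsq c) ≤ (u i0)^2 := by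
        rw [max_le_iff]
        exact ⟨sq_nonneg _, by linarith⟩
      calc gcol c = Real.sqrt (max 0 (R^2 - Dsq c)) := by rw [hgcol]
      _ ≤ Real.sqrt ((u i0)^2) := Real.sqrt_le_sqrt key
      _ = |u i0| := Real.sqrt_sq_eq_abs _
    rw [Set.mem_iUnion₂]
    rcases le_or_gt 0 (u i0) with hsgn | hsgn
    · refine ⟨c, hcS, Or.inr fun i => ⟨w i + u i, ?_, ?_, hcoe i⟩⟩
      · by_cases hi : i = i0
        · subst hi
          simp only [haR, if_pos rfl]
          rw [abs_of_nonneg hsgn] at hui0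
          linarith
        · simp only [haR, if_neg hi]
          have h7 : (c i : ℝ)/m ≤ u i := by
            rw [div_le_iff₀ hm0]; linarith [(hfl i hi).1]
          linarith
      · by_cases hi : i = i0
        · subst hi
          simp only [hbR, if_pos rfl]
          linarith [(hu12 i0).2]
        · simp only [hbR, if_neg hi]
          have h7 : u i ≤ ((c i : ℝ)+1)/m := by
            rw [le_div_iff₀ hm0]; linarith [(hfl i hi).2]
          linarith
    · refine ⟨c, hcS, Or.inl fun i => ⟨w i + u i, ?_, ?_, hcoe i⟩⟩
      · by_cases hi : i = i0
        · subst hi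
          simp only [haL, if_pos rfl]
          linarith [(hu12 i0).1]
        · simp only [haL, if_neg hi]
          have h7 : (c i : ℝ)/m ≤ u i := by
            rw [div_le_iff₀ hm0]; linarith [(hfl i hi).1]
          linarith
      · by_cases hi : i = i0
        · subst hi
          simp only [hbL, if_pos rfl]
          rw [abs_of_neg hsgn] at hui0
          linarith
        · simp only [hbL, if_neg hi]
          have h7 : u i ≤ ((c i : ℝ)+1)/m := by
            rw [le_div_iff₀ hm0]; linarith [(hfl i hi).2]
          linarith
  have stepCboxL : ∀ c ∈ S,
      (ν (torusBox (aL c) (bL c))).toReal ≤ (1/2 - gcol c) * (1/m)^(n-1) + Dbox := by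
    intro c _
    have hab : ∀ i, aL c i ≤ bL c i := by
      intro i
      simp only [haL, hbL]
      split_ifs with hi
      · linarith [gcolR c]
      · have hcc : (c i:ℝ)/m ≤ ((c i:ℝ)+1)/m := (div_le_div_iff_of_pos_right hm0).2 (by linarith)
        linarith
    have hba : ∀ i, bL c i ≤ aL c i + 1 := by
      intro i
      simp only [haL, hbL]
      split_ifs with hi
      · linarith [gcol0 c]
      · have h1 : ((c i:ℝ)+1)/m = (c i:ℝ)/m + 1/m := by ring
        have h2 : 1/m ≤ 1 := by rw [div_le_one hm0]; linarith
        linarith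
    have hprod : (∏ i, (bL c i - aL c i)) = (1/2 - gcol c) * (1/m)^(n-1) := by
      have heq : ∀ i : Fin n, bL c i - aL c i = if i = i0 then 1/2 - gcol c else 1/m := by
        intro i
        simp only [haL, hbL]
        split_ifs with hi <;> ring
      rw [Finset.prod_congr rfl fun i _ => heq i, prod_ite_eq_mul_pow]
    have hb := hbox (aL c) (bL c) hab hba
    rw [hprod] at hb
    linarith [(abs_le.1 hb).2]
  have stepCboxR : ∀ c ∈ S,
      (ν (torusBox (aR c) (bR c))).toReal ≤ (1/2 - gcol c) * (1/m)^(n-1) + Dbox := by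
    intro c _
    have hab : ∀ i, aR c i ≤ bR c i := by
      intro i
      simp only [haR, hbR]
      split_ifs with hi
      · linarith [gcolR c]
      · have hcc : (c i:ℝ)/m ≤ ((c i:ℝ)+1)/m := (div_le_div_iff_of_pos_right hm0).2 (by linarith)
        linarith
    have hba : ∀ i, bR c i ≤ aR c i + 1 := by
      intro i
      simp only [haR, hbR]
      split_ifs with hi
      · linarith [gcol0 c]
      · have h1 : ((c i:ℝ)+1)/m = (c i:ℝ)/m + 1/m := by ring
        have h2 : 1/m ≤ 1 := by rw [div_le_one hm0]; linarith
        linarith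
    have hprod : (∏ i, (bR c i - aR c i)) = (1/2 - gcol c) * (1/m)^(n-1) := by
      have heq : ∀ i : Fin n, bR c i - aR c i = if i = i0 then 1/2 - gcol c else 1/m := by
        intro i
        simp only [haR, hbR]
        split_ifs with hi <;> ring
      rw [Finset.prod_congr rfl fun i _ => heq i, prod_ite_eq_mul_pow]
    have hb := hbox (aR c) (bR c) hab hba
    rw [hprod] at hb
    linarith [(abs_le.1 hb).2]
  have stepC : (∑ c ∈ S, 2 * gcol c * (1/m)^(n-1)) - 2*(S.card : ℝ) * Dbox ≤
      (ν (torusBall y R)).toReal := by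
    have hcompl : (ν (torusBall y R)ᶜ).toReal = 1 - (ν (torusBall y R)).toReal := by
      rw [measure_compl (measurableSet_torusBall y R) (measure_ne_top ν _), measure_univ,
        ENNReal.toReal_sub_of_le prob_le_one (by simp), ENNReal.toReal_one]
    have h1 : ν ((torusBall y R)ᶜ) ≤
        ∑ c ∈ S, (ν (torusBox (aL c) (bL c)) + ν (torusBox (aR c) (bR c))) :=
      (measure_mono coverC).trans ((measure_biUnion_finset_le S _).trans
        (Finset.sum_le_sum fun c _ => measure_union_le _ _))
    have hne : (∑ c ∈ S, (ν (torusBox (aL c) (bL c)) + ν (torusBox (aR c) (bR c)))) ≠ ⊤ := by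
      rw [ENNReal.sum_ne_top]
      exact fun c _ => ENNReal.add_ne_top.2 ⟨measure_ne_top ν _, measure_ne_top ν _⟩
    have h2 : (ν ((torusBall y R)ᶜ)).toReal ≤
        ∑ c ∈ S, ((ν (torusBox (aL c) (bL c))).toReal + (ν (torusBox (aR c) (bR c))).toReal) := by
      calc (ν ((torusBall y R)ᶜ)).toReal
          ≤ (∑ c ∈ S, (ν (torusBox (aL c) (bL c)) + ν (torusBox (aR c) (bR c)))).toReal :=
            ENNReal.toReal_mono hne h1
      _ = ∑ c ∈ S, ((ν (torusBox (aL c) (bL c))).toReal + (ν (torusBox (aR c) (bR c))).toReal) := by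
            rw [ENNReal.toReal_sum (fun c _ =>
              ENNReal.add_ne_top.2 ⟨measure_ne_top ν _, measure_ne_top ν _⟩)]
            exact Finset.sum_congr rfl fun c _ =>
              ENNReal.toReal_add (measure_ne_top ν _) (measure_ne_top ν _)
    have h3 : (ν ((torusBall y R)ᶜ)).toReal ≤
        ∑ c ∈ S, ((1 - 2 * gcol c) * (1/m)^(n-1) + 2 * Dbox) := by
      refine h2.trans (Finset.sum_le_sum fun c hc => ?_)
      have := stepCboxL c hc
      have := stepCboxR c hc
      have hring : (1 - 2 * gcol c) * (1/m)^(n-1) + 2*Dbox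
          = ((1/2 - gcol c) * (1/m)^(n-1) + Dbox) + ((1/2 - gcol c) * (1/m)^(n-1) + Dbox) := by
        ring
      rw [hring]
      linarith
    have h4 : ∑ c ∈ S, ((1 - 2 * gcol c) * (1/m)^(n-1) + 2 * Dbox)
        = 1 - (∑ c ∈ S, 2 * gcol c * (1/m)^(n-1)) + 2 * (S.card:ℝ) * Dbox := by
      have : ∀ c : Fin n → ℤ, (1 - 2 * gcol c) * (1/m)^(n-1) + 2 * Dbox
          = (1/m)^(n-1) - 2 * gcol c * (1/m)^(n-1) + 2 * Dbox := by intro c; ring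
      rw [Finset.sum_congr rfl fun c _ => this c]
      rw [Finset.sum_add_distrib, Finset.sum_sub_distrib, Finset.sum_const, Finset.sum_const,
        nsmul_eq_mul, nsmul_eq_mul]
      rw [show ((S.card : ℝ)) * (1/m)^(n-1) = 1 from hone]
      ring
    rw [hcompl, h4] at h3
    linarith
  -- STEP D : Σ 2g ≥ (R-δ)^n v  (when δ ≤ R)
  have stepD : δ ≤ R → (R-δ)^n * v ≤ (∑ c ∈ S, 2 * gcol c * (1/m)^(n-1)) := by
    intro hδR
    have hRδ0 : 0 ≤ R - δ := by linarith
    set Bin : Set (Fin n → ℝ) := {x | ∑ j, (x j - w j)^2 ≤ (R-δ)^2} with hBindef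
    set eG : (Fin n → ℤ) → Set (Fin n → ℝ) := fun c =>
      Set.pi Set.univ (fun j => Set.Icc (if j = i0 then w i0 - gcol c else w j + (c j:ℝ)/m)
        (if j = i0 then w i0 + gcol c else w j + ((c j:ℝ)+1)/m)) with heG
    have coverI : Bin ⊆ ⋃ c ∈ S, eG c := by
      intro x hx
      rw [hBindef, Set.mem_setOf_eq] at hx
      have habs : ∀ j, |x j - w j| ≤ R - δ := by
        intro j
        have h1 : (x j - w j)^2 ≤ (R-δ)^2 := by
          have h2 := Finset.single_le_sum (f := fun j => (x j - w j)^2)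
            (fun j _ => sq_nonneg _) (Finset.mem_univ j)
          linarith
        calc |x j - w j| = Real.sqrt ((x j - w j)^2) := (Real.sqrt_sq_eq_abs _).symm
        _ ≤ Real.sqrt ((R-δ)^2) := Real.sqrt_le_sqrt h1
        _ = R - δ := Real.sqrt_sq hRδ0
      have hu : ∀ j, -(1/2) ≤ x j - w j ∧ x j - w j < 1/2 := by
        intro j
        have h2 := habs j
        have h3 := abs_le.1 h2
        constructor
        · linarith [h3.1]
        · linarith [h3.2, hδ0]
      set c : Fin n → ℤ := fun j => if j = i0 then (0:ℤ) else ⌊(x j - w j) * m⌋ with hcdef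
      have hcS : c ∈ S := memS _ hu
      have hfl : ∀ j, j ≠ i0 → (c j : ℝ) ≤ (x j - w j) * m ∧ (x j - w j) * m < c j + 1 := by
        intro j hj
        rw [hcdef]
        simp only [if_neg hj]
        exact ⟨Int.floor_le _, Int.lt_floor_add_one _⟩
      have hsplit : (∑ j ∈ Finset.univ.erase i0, (x j - w j)^2) + (x i0 - w i0)^2
          = ∑ j, (x j - w j)^2 := Finset.sum_erase_add _ _ (Finset.mem_univ i0)
      have herase_le : ∑ j ∈ Finset.univ.erase i0, (x j - w j)^2 ≤ (R-δ)^2 := by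
        nlinarith [sq_nonneg (x i0 - w i0)]
      -- Cauchy bound on Σ |u j|
      set su : ℝ := ∑ j ∈ Finset.univ.erase i0, |x j - w j| with hsu
      have hsu0 : 0 ≤ su := Finset.sum_nonneg fun j _ => abs_nonneg _
      have hsu_le : su ≤ Real.sqrt n * (R - δ) := by
        have h1 : su^2 ≤ ((n:ℝ)-1) * ∑ j ∈ Finset.univ.erase i0, (x j - w j)^2 := by
          rw [hsu]
          have := sq_sum_le_card_mul_sum_sq
            (s := Finset.univ.erase i0) (f := fun j => |x j - w j|)
          calc (∑ j ∈ Finset.univ.erase i0, |x j - w j|)^2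
              ≤ ((Finset.univ.erase i0).card : ℝ) *
                ∑ j ∈ Finset.univ.erase i0, |x j - w j|^2 := by exact_mod_cast this
          _ = ((n:ℝ)-1) * ∑ j ∈ Finset.univ.erase i0, (x j - w j)^2 := by
              rw [hcard_erase]
              congr 1
              exact Finset.sum_congr rfl fun j _ => sq_abs _
        have h2 : su^2 ≤ (n:ℝ) * (R-δ)^2 := by
          have hn1 : ((n:ℝ)-1) ≤ (n:ℝ) := by linarith
          nlinarith [Finset.sum_nonneg (fun j (_ : j ∈ Finset.univ.erase i0) =>
            sq_nonneg (x j - w j))]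
        calc su = Real.sqrt (su^2) := (Real.sqrt_sq hsu0).symm
        _ ≤ Real.sqrt ((n:ℝ) * (R-δ)^2) := Real.sqrt_le_sqrt h2
        _ = Real.sqrt n * (R-δ) := by
            rw [Real.sqrt_mul (by positivity) _, Real.sqrt_sq hRδ0]
      have hDle : Dsq c ≤ (∑ j ∈ Finset.univ.erase i0, (x j - w j)^2)
          + 2/m * su + ((n:ℝ)-1) * (1/m)^2 := by
        have hterm : ∀ j ∈ Finset.univ.erase i0,
            (max ((c j:ℝ)+1) (-(c j:ℝ)) / m)^2 ≤ (|x j - w j| + 1/m)^2 := by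
          intro j hj
          have hj' := (Finset.mem_erase.1 hj).1
          obtain ⟨hl, hr⟩ := hfl j hj'
          have h2 : max ((c j:ℝ)+1) (-(c j:ℝ)) ≤ |x j - w j| * m + 1 := by
            have := Dj_le_abs_add hl hr
            rwa [abs_mul, abs_of_pos hm0] at this
          have h4 : max ((c j:ℝ)+1) (-(c j:ℝ)) / m ≤ |x j - w j| + 1/m := by
            rw [div_le_iff₀ hm0]
            have hmm : (|x j - w j| + 1/m) * m = |x j - w j| * m + 1 := by
              field_simp
            rw [hmm]
            exact h2
          have h5 : (0:ℝ) ≤ max ((c j:ℝ)+1) (-(c j:ℝ)) / m := by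
            apply div_nonneg _ hm0.le
            have := abs_le_Dj hl hr
            linarith [abs_nonneg ((x j - w j) * m)]
          exact pow_le_pow_left₀ h5 h4 2
        calc Dsq c ≤ ∑ j ∈ Finset.univ.erase i0, (|x j - w j| + 1/m)^2 := by
              rw [hDsq]
              exact Finset.sum_le_sum hterm
        _ = (∑ j ∈ Finset.univ.erase i0, |x j - w j|^2) + 2/m * su + ((n:ℝ)-1) * (1/m)^2 := by
              rw [hterm_expand (fun j => |x j - w j|), hsu]
        _ = (∑ j ∈ Finset.univ.erase i0, (x j - w j)^2) + 2/m * su + ((n:ℝ)-1) * (1/m)^2 := by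
              congr 1
              congr 1
              exact Finset.sum_congr rfl fun j _ => sq_abs _
      have hkey : (x i0 - w i0)^2 ≤ max 0 (R^2 - Dsq c) := by
        apply le_max_of_le_right
        have h6 : 2/m * su ≤ 2*(R-δ)*δ := by
          have := mul_le_mul_of_nonneg_left hsu_le (by positivity : (0:ℝ) ≤ 2/m)
          calc 2/m * su ≤ 2/m * (Real.sqrt n * (R-δ)) := this
          _ = 2*(R-δ)*δ := by rw [hδdef]; ring
        have h7 : ((n:ℝ)-1) * (1/m)^2 ≤ δ^2 := by
          rw [hδsq]
          have h8 : (0:ℝ) < m^2 := by positivity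
          have h9 : ((n:ℝ)-1) ≤ (n:ℝ) := by linarith
          calc ((n:ℝ)-1) * (1/m)^2 = ((n:ℝ)-1) * (m^2)⁻¹ := by ring
          _ ≤ (n:ℝ) * (m^2)⁻¹ := mul_le_mul_of_nonneg_right h9 (le_of_lt (inv_pos.2 h8))
          _ = (n:ℝ)/m^2 := by ring
        nlinarith [hsplit, hx, hDle]
      have hui0 : |x i0 - w i0| ≤ gcol c := by
        calc |x i0 - w i0| = Real.sqrt ((x i0 - w i0)^2) := (Real.sqrt_sq_eq_abs _).symm
        _ ≤ Real.sqrt (max 0 (R^2 - Dsq c)) := Real.sqrt_le_sqrt hkey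
        _ = gcol c := by rw [hgcol]
      rw [Set.mem_iUnion₂]
      refine ⟨c, hcS, ?_⟩
      rw [heG, Set.mem_pi]
      intro j _
      rw [Set.mem_Icc]
      by_cases hj : j = i0
      · rw [if_pos hj, if_pos hj, hj]
        have h9 := abs_le.1 hui0
        exact ⟨by linarith [h9.1], by linarith [h9.2]⟩
      · rw [if_neg hj, if_neg hj]
        obtain ⟨hl, hr⟩ := hfl j hj
        constructor
        · have : (c j : ℝ)/m ≤ x j - w j := by rw [div_le_iff₀ hm0]; linarith
          linarith
        · have : x j - w j ≤ ((c j : ℝ)+1)/m := by rw [le_div_iff₀ hm0]; linarith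
          linarith
    have hVne : volume (Metric.closedBall (0:EuclideanSpace ℝ (Fin n)) 1) ≠ ⊤ :=
      measure_closedBall_lt_top.ne
    have hvolBin : volume Bin = ENNReal.ofReal ((R-δ)^n * v) := by
      rw [hBindef, vol_sumsq n w (R-δ) hRδ0, ENNReal.ofReal_mul (by positivity)]
      congr 1
      rw [hv]
      unfold ballVol
      exact (ENNReal.ofReal_toReal hVne).symm
    have hvolG : ∀ c : Fin n → ℤ,
        volume (eG c) = ENNReal.ofReal (2 * gcol c * (1/m)^(n-1)) := by
      intro c
      have hnn : ∀ i : Fin n, (0:ℝ) ≤ (if i = i0 then 2 * gcol c else 1/m) := by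
        intro i
        split_ifs
        · linarith [gcol0 c]
        · positivity
      rw [heG, volume_pi_pi]
      have h1 : ∀ j : Fin n, volume (Set.Icc (if j = i0 then w i0 - gcol c else w j + (c j:ℝ)/m)
          (if j = i0 then w i0 + gcol c else w j + ((c j:ℝ)+1)/m))
          = ENNReal.ofReal (if j = i0 then 2 * gcol c else 1/m) := by
        intro j
        rw [Real.volume_Icc]
        congr 1
        split_ifs with hj <;> ring
      rw [Finset.prod_congr rfl fun j _ => h1 j, ← ENNReal.ofReal_prod_of_nonneg
        (fun i _ => hnn i), prod_ite_eq_mul_pow]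
    have hchain : ENNReal.ofReal ((R-δ)^n * v) ≤
        ENNReal.ofReal (∑ c ∈ S, 2 * gcol c * (1/m)^(n-1)) := by
      calc ENNReal.ofReal ((R-δ)^n * v) = volume Bin := hvolBin.symm
      _ ≤ ∑ c ∈ S, volume (eG c) := (measure_mono coverI).trans (measure_biUnion_finset_le S _)
      _ = ∑ c ∈ S, ENNReal.ofReal (2 * gcol c * (1/m)^(n-1)) :=
          Finset.sum_congr rfl fun c _ => hvolG c
      _ = ENNReal.ofReal (∑ c ∈ S, 2 * gcol c * (1/m)^(n-1)) :=
          (ENNReal.ofReal_sum_of_nonneg fun c _ =>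
            mul_nonneg (by linarith [gcol0 c]) (by positivity)).symm
    exact (ENNReal.ofReal_le_ofReal_iff (Finset.sum_nonneg fun c _ =>
      mul_nonneg (by linarith [gcol0 c]) (by positivity))).1 hchain
  -- volume of the ball
  have hBV : ballVol n R = R^n * v := by
    rw [hv]
    unfold ballVol
    rw [Measure.addHaar_closedBall' _ _ hR0.le, finrank_euclideanSpace_fin, ENNReal.toReal_mul,
      ENNReal.toReal_ofReal (by positivity)]
  have hR1 : R + δ ≤ 1 := by linarith
  -- combine
  have up : (ν (torusBall y R)).toReal - ballVol n R ≤
      v * n * Real.sqrt n / m + 2 * m^(n-1) * Dbox := by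
    have h1 : (R+δ)^n - R^n ≤ n * δ := by
      have := pow_sub_pow_le n (b := R) (a := R + δ) hR0.le (by linarith) hR1
      simpa using this
    have h2 : (R+δ)^n * v - R^n * v ≤ (n * δ) * v := by nlinarith
    have h3 : (n:ℝ) * δ * v = v * n * Real.sqrt n / m := by
      rw [hδdef]; ring
    have h4 : (S.card : ℝ) * Dbox ≤ 2 * m^(n-1) * Dbox := by
      rw [cardS]; nlinarith [pow_nonneg hm0.le (n-1)]
    rw [hBV]
    have hup1 : (ν (torusBall y R)).toReal ≤ (R+δ)^n * v + (S.card:ℝ)*Dbox := by linarith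
    linarith [h2, h3, h4, hup1]
  have low : ballVol n R - (ν (torusBall y R)).toReal ≤
      v * n * Real.sqrt n / m + 2 * m^(n-1) * Dbox := by
    rw [hBV]
    rcases le_or_gt δ R with hcase | hcase
    · have h1 : R^n - (R-δ)^n ≤ n * δ := by
        have := pow_sub_pow_le n (b := R - δ) (a := R) (by linarith) (by linarith) (by linarith)
        simpa using this
      have h2 : R^n * v - (R-δ)^n * v ≤ (n*δ) * v := by nlinarith
      have h3 : (n:ℝ) * δ * v = v * n * Real.sqrt n / m := by rw [hδdef]; ring
      have h4 : 2*(S.card : ℝ) * Dbox ≤ 2 * m^(n-1) * Dbox := by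
        rw [cardS]
      linarith [stepD hcase, stepC]
    · have h1 : R^n ≤ n * δ := by
        have hRn : R^n ≤ R := by
          calc R^n ≤ R^1 := pow_le_pow_of_le_one hR0.le (by linarith) hn
          _ = R := pow_one R
        have : (1:ℝ) ≤ (n:ℝ) := by exact_mod_cast hn
        nlinarith
      have h3 : (n:ℝ) * δ * v = v * n * Real.sqrt n / m := by rw [hδdef]; ring
      have h5 : R^n * v ≤ ((n:ℝ)*δ)*v := by nlinarith
      linarith [mul_nonneg (mul_nonneg (by norm_num : (0:ℝ) ≤ 2) (pow_nonneg hm0.le (n-1))) hD, hν0]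
  rw [abs_sub_le_iff]
  exact ⟨up, low⟩

lemma ballVol_scale (n : ℕ) (R : ℝ) (hR : 0 ≤ R) : ballVol n R = R^n * ballVol n 1 := by
  unfold ballVol
  rw [Measure.addHaar_closedBall' _ _ hR, finrank_euclideanSpace_fin, ENNReal.toReal_mul,
    ENNReal.toReal_ofReal (by positivity)]

set_option maxHeartbeats 1000000 in
/-- The ball discrepancy of a probability measure on `𝕋ⁿ` is bounded by a constant
(depending only on `n`) times the `n`-th root of its box discrepancy. -/
theorem ball_discrepancy_le_box_discrepancy (n : ℕ) (hn : 1 ≤ n) :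
    ∃ C > 0, ∀ (ν : Measure (Fin n → AddCircle (1:ℝ))), IsProbabilityMeasure ν →
      ∀ Dbox : ℝ, 0 ≤ Dbox →
      (∀ a b : Fin n → ℝ, (∀ i, a i ≤ b i) → (∀ i, b i ≤ a i + 1) →
        |(ν (torusBox a b)).toReal - ∏ i, (b i - a i)| ≤ Dbox) →
      ∀ (y : Fin n → AddCircle (1:ℝ)) (R : ℝ), 0 < R → R < 1 / 2 →
        |(ν (torusBall y R)).toReal - ballVol n R| ≤ C * Dbox ^ ((1 : ℝ) / n) := by
  classical
  set v : ℝ := ballVol n 1 with hv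
  have hv0 : 0 ≤ v := ENNReal.toReal_nonneg
  have hn0 : (0:ℝ) < n := by exact_mod_cast hn
  set A : ℝ := v * n * Real.sqrt n with hA
  have hA0 : 0 ≤ A := by
    rw [hA]
    positivity
  refine ⟨(1+v)*(4*n) + (A + 2^n) + 1, ?_, ?_⟩
  · have h1 : (0:ℝ) ≤ (1+v)*(4*n) := by positivity
    have h2 : (0:ℝ) ≤ A + 2^n := by positivity
    linarith
  intro ν hprob Dbox hD hbox y R hR0 hRh
  haveI := hprob
  set C : ℝ := (1+v)*(4*n) + (A + 2^n) + 1 with hC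
  set E : ℝ := |(ν (torusBall y R)).toReal - ballVol n R| with hE
  have hcore : ∀ K : ℕ, n ≤ K → E ≤ A / (2*K) + 2 * (2*(K:ℝ))^(n-1) * Dbox :=
    fun K hK => core n K hn hK ν Dbox hD hbox y R hR0 hRh
  rcases eq_or_lt_of_le hD with hD0 | hD0
  · -- Dbox = 0
    have hE0 : E ≤ 0 := by
      apply le_of_forall_pos_le_add
      intro ε hε
      obtain ⟨K, hKn, hKε⟩ : ∃ K : ℕ, n ≤ K ∧ A ≤ ε * K := by
        refine ⟨n + ⌈A/ε⌉₊, Nat.le_add_right _ _, ?_⟩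
        have h1 : A/ε ≤ (⌈A/ε⌉₊ : ℝ) := Nat.le_ceil _
        have h2 : A ≤ ε * ⌈A/ε⌉₊ := by
          rw [div_le_iff₀ hε] at h1
          linarith
        have h3 : (0:ℝ) ≤ ε * n := by positivity
        push_cast
        linarith
      have := hcore K hKn
      rw [← hD0] at this
      have hK0 : (0:ℝ) < 2*K := by
        have : (1:ℝ) ≤ (K:ℝ) := by exact_mod_cast le_trans hn hKn
        linarith
      have h4 : A / (2*K) ≤ ε := by
        rw [div_le_iff₀ hK0]
        have hεK : ε * (2*K) = 2*(ε*K) := by ring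
        nlinarith
      simp only [mul_zero] at this
      linarith
    rw [← hD0, Real.zero_rpow (by positivity : ((1:ℝ)/n) ≠ 0), mul_zero]
    exact hE0
  · -- Dbox > 0
    set t : ℝ := Dbox ^ ((1:ℝ)/n) with ht
    have ht0 : 0 < t := Real.rpow_pos_of_pos hD0 _
    have htn : t^n = Dbox := by
      rw [ht, ← Real.rpow_natCast (Dbox ^ ((1:ℝ)/n)) n, ← Real.rpow_mul hD]
      rw [one_div, inv_mul_cancel₀ (ne_of_gt hn0), Real.rpow_one]
    rcases le_or_gt (1/(4*(n:ℝ))) t with hbig | hsmall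
    · -- t large: trivial bound
      have hν1 : (ν (torusBall y R)).toReal ≤ 1 := by
        have h : ν (torusBall y R) ≤ ν Set.univ := measure_mono (Set.subset_univ _)
        have h2 := ENNReal.toReal_mono (measure_ne_top ν Set.univ) h
        simpa [measure_univ] using h2
      have hbv : ballVol n R = R^n * v := ballVol_scale n R hR0.le
      have hbR : 0 ≤ ballVol n R := ENNReal.toReal_nonneg
      have hb1 : ballVol n R ≤ v := by
        rw [hbv]
        have h1 : R^n ≤ 1 := pow_le_one₀ hR0.le (by linarith)
        nlinarith
      have hEtriv : E ≤ 1 + v := by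
        rw [hE, abs_sub_le_iff]
        constructor
        · linarith
        · linarith [ENNReal.toReal_nonneg (a := ν (torusBall y R))]
      have h4nt : 1 ≤ 4*(n:ℝ)*t := by
        rw [div_le_iff₀ (by positivity : (0:ℝ) < 4*(n:ℝ))] at hbig
        linarith
      calc E ≤ 1 + v := hEtriv
      _ ≤ (1+v) * (4*n*t) := by nlinarith
      _ = ((1+v)*(4*n)) * t := by ring
      _ ≤ C * t := by
          have : (0:ℝ) ≤ A + 2^n := by positivity
          nlinarith
    · -- t small
      set K : ℕ := n + ⌈1/(2*t)⌉₊ with hK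
      have hKn : n ≤ K := Nat.le_add_right _ _
      have hK1 : (1:ℝ) ≤ (K:ℝ) := by exact_mod_cast le_trans hn hKn
      have hK0 : (0:ℝ) < 2*(K:ℝ) := by linarith
      have hceil_ge : 1/(2*t) ≤ (⌈1/(2*t)⌉₊ : ℝ) := Nat.le_ceil _
      have hKcast : (K:ℝ) = (n:ℝ) + (⌈1/(2*t)⌉₊ : ℝ) := by
        rw [hK]
        push_cast
        ring
      have h2K_ge : 1/t ≤ 2*(K:ℝ) := by
        have hnn : (0:ℝ) ≤ (n:ℝ) := by positivity
        have h1 : 1/t = 2 * (1/(2*t)) := by field_simp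
        rw [hKcast]
        linarith
      have h2K_le : 2*(K:ℝ) ≤ 2/t := by
        have hceil_le : (⌈1/(2*t)⌉₊ : ℝ) < 1/(2*t) + 1 :=
          Nat.ceil_lt_add_one (by positivity)
        have hts : t < 1/(4*(n:ℝ)) := hsmall
        have h51 : t * (4*(n:ℝ)) < 1 := by
          rw [lt_div_iff₀ (by positivity : (0:ℝ) < 4*(n:ℝ))] at hts
          linarith
        have h52 : 4*(n:ℝ) < 1/t := by
          rw [lt_div_iff₀ ht0]
          linarith
        have h53 : 2*(n:ℝ)+2 ≤ 4*(n:ℝ) := by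
          have : (1:ℝ) ≤ (n:ℝ) := by exact_mod_cast hn
          linarith
        have h54 : 2*(1/(2*t)) = 1/t := by field_simp
        have h8 : 2*(K:ℝ) < 2*(n:ℝ) + (1/t) + 2 := by
          rw [hKcast]
          linarith
        have h9 : 2/t = 1/t + 1/t := by ring
        linarith
      have hA2K : A / (2*(K:ℝ)) ≤ A * t := by
        rw [div_le_iff₀ hK0]
        have h1 : 1 ≤ t * (2*(K:ℝ)) := by
          have h2 : t * (1/t) = 1 := by field_simp
          have h3 := mul_le_mul_of_nonneg_left h2K_ge ht0.le
          linarith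
        calc A = A * 1 := (mul_one A).symm
        _ ≤ A * (t*(2*(K:ℝ))) := mul_le_mul_of_nonneg_left h1 hA0
        _ = A * t * (2*(K:ℝ)) := by ring
      have hpow : (2*(K:ℝ))^(n-1) ≤ (2/t)^(n-1) :=
        pow_le_pow_left₀ (by linarith) h2K_le (n-1)
      have hDbox_t : Dbox = t^(n-1) * t := by
        rw [← pow_succ, show n - 1 + 1 = n by omega, htn]
      have hmain2 : 2 * (2*(K:ℝ))^(n-1) * Dbox ≤ 2^n * t := by
        have h1 : 2 * (2*(K:ℝ))^(n-1) * Dbox ≤ 2 * (2/t)^(n-1) * (t^(n-1) * t) := by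
          rw [← hDbox_t]
          exact mul_le_mul_of_nonneg_right
            (mul_le_mul_of_nonneg_left hpow (by norm_num)) hD
        have h3 : 2 * (2/t)^(n-1) * (t^(n-1) * t) = 2^n * t := by
          have h4 : (2/t)^(n-1) * t^(n-1) = 2^(n-1) := by
            rw [← mul_pow, div_mul_cancel₀ _ (ne_of_gt ht0)]
          calc 2 * (2/t)^(n-1) * (t^(n-1) * t) = 2 * ((2/t)^(n-1) * t^(n-1)) * t := by ring
          _ = 2 * 2^(n-1) * t := by rw [h4]
          _ = 2^n * t := by rw [← pow_succ', show n - 1 + 1 = n by omega]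
        linarith [h1, h3.le, h3.ge]
      have := hcore K hKn
      calc E ≤ A / (2*K) + 2 * (2*(K:ℝ))^(n-1) * Dbox := this
      _ ≤ A * t + 2^n * t := by linarith
      _ = (A + 2^n) * t := by ring
      _ ≤ C * t := by
          have h7 : (0:ℝ) ≤ (1+v)*(4*n) := by positivity
          nlinarith [ht0.le]
end
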